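/- Let g = 01/2/031/3, h = 01/12/20/3, and w = h(g^ω(0)). Then every factor of w of length at least 3 parses uniquely into the code words 01, 12, 20, 3 of h; equivalently, h restricted to factors of g^ω(0) of length at least 2 yields factors of w with a unique h-preimage decomposition. -/

import Mathlib

def IsFactorOf {α : Type*} (u : List α) (w : ℕ → α) : Prop :=
  ∃ i : ℕ, u = (List.range u.length).map fun k => w (i + k)

/-- The morphism g = 01/2/031/3. -/
def g : ℕ → List ℕ
  | 0 => [0, 1]
  | 1 => [2]
  | 2 => [0, 3, 1]
  | _ => [3]

def IsPrefixOf (l : List ℕ) (w : ℕ → ℕ) : Prop :=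
  ∀ i, i < l.length → l[i]? = some (w i)

/-- w is the infinite fixed point g^ω(0): every iterate g^n(0) is a prefix of w. -/
def IsFixedPointG (w : ℕ → ℕ) : Prop :=
  ∀ n : ℕ, IsPrefixOf ((fun l => l.flatMap g)^[n] [0]) w

/-- The morphism h = 01/12/20/3. -/
def hm : ℕ → List ℕ
  | 0 => [0, 1]
  | 1 => [1, 2]
  | 2 => [2, 0]
  | _ => [3]

/-- v is the infinite word h(g^ω(0)): the h-image of every iterate g^n(0) is a prefix of v. -/
def IsHImageOfG (v : ℕ → ℕ) : Prop :=
  ∀ n : ℕ, IsPrefixOf (((fun l => l.flatMap g)^[n] [0]).flatMap hm) v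

def Adm (x y : ℕ) : Prop :=
  (x,y) ∈ [(0,1),(1,2),(2,0),(0,3),(3,1),(1,0),(1,3),(3,2),(2,3),(3,0)]

instance (x y : ℕ) : Decidable (Adm x y) :=
  inferInstanceAs (Decidable ((x,y) ∈ [(0,1),(1,2),(2,0),(0,3),(3,1),(1,0),(1,3),(3,2),(2,3),(3,0)]))

lemma g_alpha {a x : ℕ} (ha : a ≤ 3) (hx : x ∈ g a) : x ≤ 3 := by
  interval_cases a <;> simp [g] at hx <;> omega

lemma g_len {a : ℕ} : 1 ≤ (g a).length := by
  match a with
  | 0 | 1 | 2 | (n+3) => simp [g]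

lemma chain_closure {l : List ℕ} (ha : ∀ x ∈ l, x ≤ 3) (hc : List.Chain' Adm l) :
    List.Chain' Adm (l.flatMap g) := by
  induction l with
  | nil => simp [List.Chain']
  | cons x t ih =>
    unfold List.Chain' at *
    have hx : x ≤ 3 := ha x (by simp)
    have ht : ∀ y ∈ t, y ≤ 3 := fun y hy => ha y (by simp [hy])
    rw [List.flatMap_cons, List.isChain_append]
    refine ⟨?_, ih ht hc.tail, ?_⟩
    · interval_cases x <;> simp [g, List.isChain_cons_cons, Adm]
    · intro p hp q hq
      match t, hc with
      | [], _ => simp at hq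
      | y :: t', hc =>
        have hy : y ≤ 3 := ht y (by simp)
        have hxy : Adm x y := (List.isChain_cons_cons.mp hc).1
        rw [List.flatMap_cons] at hq
        interval_cases x <;> interval_cases y <;>
          (simp [g] at hp hq; subst hp; subst hq; revert hxy; decide)

def L (n : ℕ) : List ℕ := (fun l => l.flatMap g)^[n] [0]

lemma L_succ (n : ℕ) : L (n+1) = (L n).flatMap g := by
  simp [L, Function.iterate_succ_apply']

lemma L_alpha : ∀ n, ∀ x ∈ L n, x ≤ 3 := by
  intro n
  induction n with
  | zero => simp [L]
  | succ n ih =>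
    rw [L_succ]
    intro x hx
    obtain ⟨a, ha, hxa⟩ := List.mem_flatMap.mp hx
    exact g_alpha (ih a ha) hxa

lemma L_chain : ∀ n, List.Chain' Adm (L n) := by
  intro n
  induction n with
  | zero => simp [L, List.Chain']
  | succ n ih => rw [L_succ]; exact chain_closure (L_alpha n) ih

lemma flatMap_g_len (l : List ℕ) : l.length ≤ (l.flatMap g).length := by
  induction l with
  | nil => simp
  | cons x t ih =>
    rw [List.flatMap_cons, List.length_append, List.length_cons]
    have := @g_len x; omega

lemma flatMap_g_len' (l : List ℕ) (h0 : 0 ∈ l) : l.length + 1 ≤ (l.flatMap g).length := by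
  induction l with
  | nil => simp at h0
  | cons x t ih =>
    rw [List.flatMap_cons, List.length_append, List.length_cons]
    rcases List.mem_cons.mp h0 with h | h
    · subst h
      have := flatMap_g_len t
      have hg : (g 0).length = 2 := rfl; omega
    · have := ih h
      have := @g_len x
      omega

lemma L_zero_mem : ∀ n, 0 ∈ L n := by
  intro n
  induction n with
  | zero => simp [L]
  | succ n ih => rw [L_succ]; exact List.mem_flatMap.mpr ⟨0, ih, by simp [g]⟩

lemma L_len : ∀ n, n + 1 ≤ (L n).length := by
  intro n
  induction n with
  | zero => simp [L]
  | succ n ih =>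
    rw [L_succ]
    have := flatMap_g_len' (L n) (L_zero_mem n)
    omega

lemma seg_eq {Lw : List ℕ} {w : ℕ → ℕ} (hL : IsPrefixOf Lw w) {i k : ℕ}
    (h : i + k ≤ Lw.length) :
    (Lw.drop i).take k = (List.range k).map (fun j => w (i+j)) := by
  apply List.ext_getElem
  · simp; omega
  · intro j h1 h2
    have hj : j < k := by simp at h2; omega
    have hb : i + j < Lw.length := by omega
    have := hL (i+j) hb
    rw [List.getElem?_eq_getElem hb] at this
    simp [List.getElem_take, List.getElem_drop]
    exact Option.some_injective _ this

section W
variable {w : ℕ → ℕ} (hw : IsFixedPointG w)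

include hw

lemma w_getElem {n i : ℕ} (h : i < (L n).length) : (L n)[i] = w i := by
  have hp : IsPrefixOf (L n) w := hw n
  have := hp i h
  rw [List.getElem?_eq_getElem h] at this
  exact Option.some_injective _ this

lemma w_alpha (i : ℕ) : w i ≤ 3 := by
  have h : i < (L i).length := by have := L_len i; omega
  rw [← w_getElem hw h]
  exact L_alpha i _ (List.getElem_mem _)

lemma w_pair (i : ℕ) : Adm (w i) (w (i+1)) := by
  have h2 : i + 2 ≤ (L (i+1)).length := by have := L_len (i+1); omega
  have hc := (List.isChain_iff_getElem.mp (L_chain (i+1))) i (by omega)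
  rwa [w_getElem hw (by omega), w_getElem hw (by omega)] at hc

omit hw in
lemma factor_spec {q : List ℕ} (h : IsFactorOf q w) :
    ∃ i, ∀ j, (hj : j < q.length) → q[j] = w (i + j) := by
  obtain ⟨i, hq⟩ := h
  refine ⟨i, fun j hj => ?_⟩
  have h2 : q[j]? = some (w (i + j)) := by
    conv_lhs => rw [hq]
    rw [List.getElem?_map]
    have hj' : j < q.length := hj
    simp [List.getElem?_range (by omega : j < q.length)]
  rw [List.getElem?_eq_getElem hj] at h2
  exact Option.some_injective _ h2

lemma factor_mem_le {q : List ℕ} (h : IsFactorOf q w) : ∀ x ∈ q, x ≤ 3 := by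
  obtain ⟨i, hs⟩ := factor_spec h
  intro x hx
  obtain ⟨j, hj, rfl⟩ := List.mem_iff_getElem.mp hx
  rw [hs j hj]; exact w_alpha hw _

lemma factor_pair {x y : ℕ} {r : List ℕ} (h : IsFactorOf (x::y::r) w) : Adm x y := by
  obtain ⟨i, hs⟩ := factor_spec h
  have h0 := hs 0 (by simp)
  have h1 := hs 1 (by simp)
  simp only [List.getElem_cons_zero, List.getElem_cons_succ] at h0 h1
  rw [h0, h1]
  exact w_pair hw i

lemma infix_factor {q : List ℕ} {n : ℕ} (h : q <:+: L n) : IsFactorOf q w := by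
  obtain ⟨s, t, hst⟩ := h
  refine ⟨s.length, ?_⟩
  have hp : IsPrefixOf (L n) w := hw n
  have hlen : s.length + q.length ≤ (L n).length := by
    rw [← hst]; simp only [List.length_append]; omega
  have hs := seg_eq hp hlen
  rw [← hst, List.append_assoc, List.drop_left, List.take_left] at hs
  exact hs

end W

lemma hm_len {a : ℕ} : 1 ≤ (hm a).length ∧ (hm a).length ≤ 2 := by
  match a with
  | 0 | 1 | 2 | (n+3) => simp [hm]

lemma hm_big {a : ℕ} (h : 3 ≤ a) : hm a = [3] := by
  match a, h with
  | (n+3), _ => rfl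

lemma drop_flatMap (l : List ℕ) (i : ℕ) :
    ∃ s a t', (l.flatMap hm).drop i = s ++ t'.flatMap hm ∧ s <:+ hm a ∧ s ≠ hm a ∧
      ((if s = [] then ([] : List ℕ) else [a]) ++ t') <:+ l := by
  induction l generalizing i with
  | nil =>
    exact ⟨[], 0, [], by simp, List.nil_suffix, by simp [hm], by simp⟩
  | cons c t ih =>
    rcases Nat.eq_zero_or_pos i with hi0 | hi0
    · subst hi0
      exact ⟨[], 0, c :: t, by simp, List.nil_suffix, by simp [hm], by simp⟩
    by_cases hilt : i < (hm c).length
    · refine ⟨(hm c).drop i, c, t, ?_, List.drop_suffix _ _, ?_, ?_⟩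
      · rw [List.flatMap_cons, List.drop_append_of_le_length (le_of_lt hilt)]
      · intro hcon
        have := congrArg List.length hcon
        simp at this; omega
      · rw [if_neg (by intro hcon; have := congrArg List.length hcon; simp at this; omega)]
        exact List.suffix_refl _
    · push_neg at hilt
      obtain ⟨s, a, t', h1, h2, h3, h4⟩ := ih (i - (hm c).length)
      refine ⟨s, a, t', ?_, h2, h3, h4.trans (List.suffix_cons c t)⟩
      rw [List.flatMap_cons, List.drop_append,
        List.drop_eq_nil_of_le hilt, List.nil_append, h1]

lemma take_flatMap (l : List ℕ) (k : ℕ) (hk : k ≤ (l.flatMap hm).length) :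
    ∃ m p b, (l.flatMap hm).take k = m.flatMap hm ++ p ∧ p <+: hm b ∧ p ≠ hm b ∧
      (m ++ (if p = [] then ([] : List ℕ) else [b])) <+: l := by
  induction l generalizing k with
  | nil =>
    have : k = 0 := by simpa using hk
    subst this
    exact ⟨[], [], 0, by simp, List.nil_prefix, by simp [hm], by simp⟩
  | cons c t ih =>
    rcases Nat.eq_zero_or_pos k with hk0 | hk0
    · subst hk0
      exact ⟨[], [], 0, by simp, List.nil_prefix, by simp [hm], by simp⟩
    by_cases hklt : k < (hm c).length
    · refine ⟨[], (hm c).take k, c, ?_, List.take_prefix _ _, ?_, ?_⟩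
      · rw [List.flatMap_cons, List.take_append,
          Nat.sub_eq_zero_of_le (le_of_lt hklt), List.take_zero, List.append_nil]
        simp
      · intro hcon
        have := congrArg List.length hcon
        simp at this; omega
      · have hne : (hm c).take k ≠ [] := by
          intro hcon
          have h2 := congrArg List.length hcon
          have h3 := @hm_len c
          rw [List.length_take, List.length_nil] at h2
          omega
        rw [if_neg hne]
        simpa using List.cons_prefix_cons.mpr ⟨rfl, List.nil_prefix⟩
    · push_neg at hklt
      have hk' : k - (hm c).length ≤ (t.flatMap hm).length := by
        rw [List.flatMap_cons, List.length_append] at hk; omega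
      obtain ⟨m, p, b, h1, h2, h3, h4⟩ := ih (k - (hm c).length) hk'
      refine ⟨c :: m, p, b, ?_, h2, h3, ?_⟩
      · rw [List.flatMap_cons, List.take_append,
          List.take_of_length_le hklt, h1, List.flatMap_cons, List.append_assoc]
      · show c :: m ++ _ <+: c :: t
        rw [List.cons_append]
        exact List.cons_prefix_cons.mpr ⟨rfl, h4⟩

lemma suffix_pair {s : List ℕ} {c0 c1 : ℕ} (h : s <:+ [c0,c1]) :
    s = [] ∨ s = [c1] ∨ s = [c0,c1] := by
  obtain ⟨t, ht⟩ := h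
  rcases t with _ | ⟨y, _ | ⟨z, t⟩⟩ <;> simp_all

lemma suffix_single {s : List ℕ} {c0 : ℕ} (h : s <:+ [c0]) : s = [] ∨ s = [c0] := by
  obtain ⟨t, ht⟩ := h
  rcases t with _ | ⟨y, t⟩ <;> simp_all

lemma prefix_pair {p : List ℕ} {c0 c1 : ℕ} (h : p <+: [c0,c1]) :
    p = [] ∨ p = [c0] ∨ p = [c0,c1] := by
  obtain ⟨t, ht⟩ := h
  rcases p with _ | ⟨x, _ | ⟨y, p'⟩⟩ <;> simp_all

lemma prefix_single {p : List ℕ} {c0 : ℕ} (h : p <+: [c0]) : p = [] ∨ p = [c0] := by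
  obtain ⟨t, ht⟩ := h
  rcases p with _ | ⟨x, p'⟩ <;> simp_all

lemma suffix_shape {s : List ℕ} {a : ℕ} (h1 : s <:+ hm a) (h2 : s ≠ hm a) :
    s = [] ∨ ∃ x, x ≤ 2 ∧ s = [x] ∧ a = (x + 2) % 3 := by
  rcases Nat.lt_or_ge a 3 with ha | ha
  · interval_cases a
    · rw [show hm 0 = [0,1] from rfl] at h1 h2
      rcases suffix_pair h1 with rfl | rfl | rfl
      · exact Or.inl rfl
      · exact Or.inr ⟨1, by norm_num⟩
      · exact absurd rfl h2
    · rw [show hm 1 = [1,2] from rfl] at h1 h2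
      rcases suffix_pair h1 with rfl | rfl | rfl
      · exact Or.inl rfl
      · exact Or.inr ⟨2, by norm_num⟩
      · exact absurd rfl h2
    · rw [show hm 2 = [2,0] from rfl] at h1 h2
      rcases suffix_pair h1 with rfl | rfl | rfl
      · exact Or.inl rfl
      · exact Or.inr ⟨0, by norm_num⟩
      · exact absurd rfl h2
  · rw [hm_big ha] at h1 h2
    rcases suffix_single h1 with rfl | rfl
    · exact Or.inl rfl
    · exact absurd rfl h2

lemma prefix_shape {p : List ℕ} {b : ℕ} (h1 : p <+: hm b) (h2 : p ≠ hm b) :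
    p = [] ∨ ∃ x, x ≤ 2 ∧ p = [x] ∧ b = x := by
  rcases Nat.lt_or_ge b 3 with hb | hb
  · interval_cases b
    · rw [show hm 0 = [0,1] from rfl] at h1 h2
      rcases prefix_pair h1 with rfl | rfl | rfl
      · exact Or.inl rfl
      · exact Or.inr ⟨0, by norm_num⟩
      · exact absurd rfl h2
    · rw [show hm 1 = [1,2] from rfl] at h1 h2
      rcases prefix_pair h1 with rfl | rfl | rfl
      · exact Or.inl rfl
      · exact Or.inr ⟨1, by norm_num⟩
      · exact absurd rfl h2
    · rw [show hm 2 = [2,0] from rfl] at h1 h2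
      rcases prefix_pair h1 with rfl | rfl | rfl
      · exact Or.inl rfl
      · exact Or.inr ⟨2, by norm_num⟩
      · exact absurd rfl h2
  · rw [hm_big hb] at h1 h2
    rcases prefix_single h1 with rfl | rfl
    · exact Or.inl rfl
    · exact absurd rfl h2

lemma det_nil_cons {p p' : List ℕ} {d : ℕ} {t' : List ℕ}
    (hd : d ≤ 3) (hp : p = [] ∨ ∃ x, x ≤ 2 ∧ p = [x])
    (heq : p = (d :: t').flatMap hm ++ p') : False := by
  rcases hp with rfl | ⟨x, hx, rfl⟩ <;>
    [ (interval_cases d <;> simp [hm] at heq);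
      (interval_cases d <;> simp [hm] at heq <;> omega)]

lemma det {m m' p p' : List ℕ}
    (h3 : ∀ x ∈ m, x ≤ 3) (h3' : ∀ x ∈ m', x ≤ 3)
    (hp : p = [] ∨ ∃ x, x ≤ 2 ∧ p = [x]) (hp' : p' = [] ∨ ∃ x, x ≤ 2 ∧ p' = [x])
    (heq : m.flatMap hm ++ p = m'.flatMap hm ++ p') : m = m' ∧ p = p' := by
  induction m generalizing m' with
  | nil =>
    cases m' with
    | nil => simpa using heq
    | cons d t' =>
      simp only [List.flatMap_nil, List.nil_append] at heq
      exact absurd heq (by intro h; exact det_nil_cons (h3' d (by simp)) hp h)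
  | cons c t ih =>
    cases m' with
    | nil =>
      simp only [List.flatMap_nil, List.nil_append] at heq
      exact absurd heq.symm (by intro h; exact det_nil_cons (h3 c (by simp)) hp' h)
    | cons d t' =>
      have hc := h3 c (by simp)
      have hd := h3' d (by simp)
      have hcd : c = d := by
        interval_cases c <;> interval_cases d <;>
          first
          | rfl
          | (rw [List.flatMap_cons, List.flatMap_cons] at heq; simp [hm] at heq)
      subst hcd
      rw [List.flatMap_cons, List.flatMap_cons, List.append_assoc, List.append_assoc] at heq
      obtain ⟨h1, h2⟩ := ih (fun x hx => h3 x (by simp [hx]))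
        (fun x hx => h3' x (by simp [hx])) (List.append_cancel_left heq)
      exact ⟨by rw [h1], h2⟩

def Valid (w : ℕ → ℕ) (u : List ℕ) (smp : List ℕ × List ℕ × List ℕ) : Prop :=
  ∃ a b : ℕ, smp.1 <:+ hm a ∧ smp.1 ≠ hm a ∧ smp.2.2 <+: hm b ∧ smp.2.2 ≠ hm b ∧
    u = smp.1 ++ smp.2.1.flatMap hm ++ smp.2.2 ∧
    IsFactorOf ((if smp.1 = [] then [] else [a]) ++ smp.2.1 ++
      (if smp.2.2 = [] then [] else [b])) w

lemma cross {w : ℕ → ℕ} (hw : IsFixedPointG w) {u : List ℕ} (hu : 3 ≤ u.length)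
    {m p : List ℕ} {x : ℕ} {m' p' : List ℕ}
    (h0 : Valid w u ([], m, p)) (h1 : Valid w u ([x], m', p')) : False := by
  obtain ⟨a, b, -, -, hpb, hpnb, hu0, hf0⟩ := h0
  obtain ⟨a', b', hsa', hsna', hpb', hpnb', hu1, hf1⟩ := h1
  replace hu0 : u = m.flatMap hm ++ p := by simpa using hu0
  replace hu1 : u = x :: (m'.flatMap hm ++ p') := by simpa using hu1
  replace hf0 : IsFactorOf (m ++ (if p = [] then [] else [b])) w := by simpa using hf0
  replace hf1 : IsFactorOf (a' :: (m' ++ (if p' = [] then [] else [b']))) w := by simpa using hf1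
  -- x ≤ 2 and a' = (x+2)%3
  rcases suffix_shape hsa' hsna' with hcon | ⟨x0, hx0, hxx, ha'⟩
  · simp at hcon
  have hxeq : x0 = x := by simpa using hxx.symm
  subst hxeq
  -- m = c :: t
  rcases m with - | ⟨c, t⟩
  · rcases prefix_shape hpb hpnb with rfl | ⟨y, hy, rfl, rfl⟩ <;>
      (rw [hu0] at hu; simp at hu)
  -- m' = d :: t'
  rcases m' with - | ⟨d, t'⟩
  · rcases prefix_shape hpb' hpnb' with rfl | ⟨y, hy, rfl, rfl⟩ <;>
      (rw [hu1] at hu; simp at hu)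
  have hc3 : c ≤ 3 := factor_mem_le hw hf0 c (by simp)
  have hd3 : d ≤ 3 := factor_mem_le hw hf1 d (by simp)
  -- main head equation
  have E : hm c ++ (t.flatMap hm ++ p) = x0 :: (hm d ++ (t'.flatMap hm ++ p')) := by
    rw [hu1] at hu0
    simpa [List.append_assoc] using hu0.symm
  have key : c ≤ 2 ∧ x0 = c ∧ d = (c+1)%3 ∧
      t.flatMap hm ++ p = ((c+2)%3) :: (t'.flatMap hm ++ p') := by
    interval_cases c <;> interval_cases d <;>
      simp [hm] at E <;> first
        | omega
        | (obtain ⟨h1, h2⟩ := E; exact ⟨by norm_num, h1.symm, by norm_num, by simpa using h2⟩)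
  obtain ⟨hc2, rfl, hd, hR⟩ := key
  -- Adm a' d from hf1
  have hA1 : Adm a' d := factor_pair hw hf1
  -- second preimage letter on the 0-side
  have hA2 : Adm x0 ((x0+2)%3) := by
    rcases t with - | ⟨e, t2⟩
    · -- R = p
      simp only [List.flatMap_nil, List.nil_append] at hR
      rcases prefix_shape hpb hpnb with rfl | ⟨y, hy, rfl, rfl⟩
      · simp at hR
      · have hb : b = (x0+2)%3 := by simpa using congrArg List.headI hR
        rw [← hb]
        exact factor_pair hw (by simpa using hf0)
    · have he3 : e ≤ 3 := factor_mem_le hw hf0 e (by simp)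
      have hmod : (x0+2) % 3 ≤ 2 := by omega
      have he : e = (x0+2)%3 := by
        rw [List.flatMap_cons, List.append_assoc] at hR
        interval_cases e <;> simp [hm] at hR <;> omega
      subst he
      exact factor_pair hw (by simpa using hf0)
  subst hd ha'
  interval_cases x0 <;> revert hA1 hA2 <;> decide

lemma valid_unique {w : ℕ → ℕ} (hw : IsFixedPointG w) {u : List ℕ} (hu : 3 ≤ u.length)
    {s m p s' m' p' : List ℕ}
    (h : Valid w u (s, m, p)) (h' : Valid w u (s', m', p')) :
    (s, m, p) = (s', m', p') := by
  have hs : s = [] ∨ ∃ x, x ≤ 2 ∧ s = [x] := by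
    obtain ⟨a, -, hsa, hsna, -⟩ := h
    rcases suffix_shape hsa hsna with h1 | ⟨x, hx, h1, -⟩
    · exact Or.inl h1
    · exact Or.inr ⟨x, hx, h1⟩
  have hs' : s' = [] ∨ ∃ x, x ≤ 2 ∧ s' = [x] := by
    obtain ⟨a, -, hsa, hsna, -⟩ := h'
    rcases suffix_shape hsa hsna with h1 | ⟨x, hx, h1, -⟩
    · exact Or.inl h1
    · exact Or.inr ⟨x, hx, h1⟩
  rcases hs with rfl | ⟨x, hx, rfl⟩ <;> rcases hs' with rfl | ⟨x', hx', rfl⟩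
  · obtain ⟨a, b, -, -, hpb, hpnb, hueq, hf⟩ := h
    obtain ⟨a', b', -, -, hpb', hpnb', hueq', hf'⟩ := h'
    have hmle : ∀ y ∈ m, y ≤ 3 := fun y hy => factor_mem_le hw hf y (by simp [hy])
    have hmle' : ∀ y ∈ m', y ≤ 3 := fun y hy => factor_mem_le hw hf' y (by simp [hy])
    have hpsh : p = [] ∨ ∃ z, z ≤ 2 ∧ p = [z] := by
      rcases prefix_shape hpb hpnb with h1 | ⟨z, hz, h1, -⟩
      · exact Or.inl h1
      · exact Or.inr ⟨z, hz, h1⟩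
    have hpsh' : p' = [] ∨ ∃ z, z ≤ 2 ∧ p' = [z] := by
      rcases prefix_shape hpb' hpnb' with h1 | ⟨z, hz, h1, -⟩
      · exact Or.inl h1
      · exact Or.inr ⟨z, hz, h1⟩
    have heq : m.flatMap hm ++ p = m'.flatMap hm ++ p' := by
      have := hueq.symm.trans hueq'
      simpa using this
    obtain ⟨rfl, rfl⟩ := det hmle hmle' hpsh hpsh' heq
    rfl
  · exact (cross hw hu h h').elim
  · exact (cross hw hu h' h).elim
  · obtain ⟨a, b, -, -, hpb, hpnb, hueq, hf⟩ := h
    obtain ⟨a', b', -, -, hpb', hpnb', hueq', hf'⟩ := h'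
    have hxx : x = x' ∧ m.flatMap hm ++ p = m'.flatMap hm ++ p' := by
      have := hueq.symm.trans hueq'
      simpa [List.append_assoc] using this
    obtain ⟨rfl, heq⟩ := hxx
    have hmle : ∀ y ∈ m, y ≤ 3 := fun y hy => factor_mem_le hw hf y (by simp [hy])
    have hmle' : ∀ y ∈ m', y ≤ 3 := fun y hy => factor_mem_le hw hf' y (by simp [hy])
    have hpsh : p = [] ∨ ∃ z, z ≤ 2 ∧ p = [z] := by
      rcases prefix_shape hpb hpnb with h1 | ⟨z, hz, h1, -⟩
      · exact Or.inl h1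
      · exact Or.inr ⟨z, hz, h1⟩
    have hpsh' : p' = [] ∨ ∃ z, z ≤ 2 ∧ p' = [z] := by
      rcases prefix_shape hpb' hpnb' with h1 | ⟨z, hz, h1, -⟩
      · exact Or.inl h1
      · exact Or.inr ⟨z, hz, h1⟩
    obtain ⟨rfl, rfl⟩ := det hmle hmle' hpsh hpsh' heq
    rfl


lemma flatMap_hm_len (l : List ℕ) : l.length ≤ (l.flatMap hm).length := by
  induction l with
  | nil => simp
  | cons x t ih =>
    rw [List.flatMap_cons, List.length_append, List.length_cons]
    have := @hm_len x; omega


/-- Every factor of h(g^ω(0)) of length at least 3 parses uniquely into the code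
words of h: there is a unique decomposition into a proper suffix of a block,
complete blocks, and a proper prefix of a block, consistent with an occurrence
(i.e. whose preimage is a factor of g^ω(0)). -/
theorem unique_parsing (w v : ℕ → ℕ) (hw : IsFixedPointG w) (hv : IsHImageOfG v) :
    ∀ u : List ℕ, 3 ≤ u.length → IsFactorOf u v →
    ∃! smp : List ℕ × List ℕ × List ℕ,
      ∃ a b : ℕ,
        smp.1 <:+ hm a ∧ smp.1 ≠ hm a ∧
        smp.2.2 <+: hm b ∧ smp.2.2 ≠ hm b ∧
        u = smp.1 ++ smp.2.1.flatMap hm ++ smp.2.2 ∧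
        IsFactorOf ((if smp.1 = [] then [] else [a]) ++ smp.2.1 ++
          (if smp.2.2 = [] then [] else [b])) w := by
  intro u hu3 hufac
  obtain ⟨i, hui⟩ := hufac
  have hLlen := L_len (i + u.length)
  have hflen : (L (i + u.length)).length ≤ ((L (i + u.length)).flatMap hm).length :=
    flatMap_hm_len _
  have hik : i + u.length ≤ ((L (i + u.length)).flatMap hm).length := by omega
  have hvn : IsPrefixOf ((L (i + u.length)).flatMap hm) v := hv (i + u.length)
  have hu_seg : (((L (i + u.length)).flatMap hm).drop i).take u.length = u := by
    rw [seg_eq hvn hik]; exact hui.symm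
  obtain ⟨s, a, t', hdrop, hsa, hsna, hsuf⟩ := drop_flatMap (L (i + u.length)) i
  have hsle : s.length ≤ 1 := by
    rcases suffix_shape hsa hsna with rfl | ⟨x, hx, rfl, -⟩ <;> simp
  have hkk : s.length ≤ u.length := by omega
  have htlen : u.length - s.length ≤ (t'.flatMap hm).length := by
    have h1 := congrArg List.length hdrop
    rw [List.length_drop, List.length_append] at h1
    omega
  obtain ⟨m, p, b, htake, hpb, hpnb, hpre⟩ := take_flatMap t' (u.length - s.length) htlen
  have hueq : u = s ++ m.flatMap hm ++ p := by
    rw [← hu_seg, hdrop, List.take_append,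
      List.take_of_length_le hkk, htake, List.append_assoc]
  have hinf : ((if s = [] then ([] : List ℕ) else [a]) ++ m ++
      (if p = [] then ([] : List ℕ) else [b])) <:+: L (i + u.length) := by
    rw [List.append_assoc]
    obtain ⟨r, hr⟩ := hpre
    have hpref : (if s = [] then ([] : List ℕ) else [a]) ++
        ((m ++ if p = [] then ([] : List ℕ) else [b])) <+:
        (if s = [] then ([] : List ℕ) else [a]) ++ t' := ⟨r, by rw [List.append_assoc, hr]⟩
    exact hpref.isInfix.trans hsuf.isInfix
  have hV : Valid w u (s, m, p) :=
    ⟨a, b, hsa, hsna, hpb, hpnb, hueq, infix_factor hw hinf⟩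
  refine ⟨(s, m, p), hV, ?_⟩
  rintro ⟨s', m', p'⟩ h'
  exact valid_unique hw hu3 h' hV
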